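/- Let k, l be nonzero integers. The set B_{k,l}^× of matrices in B_{k,l} with determinant ±1 is contained in SL_2(ℤ) if and only if there is no integer a with a² ≡ -1 mod k. -/
import Mathlib


/-- Membership in `B_{k,l}`. -/
def Bmem (k l : ℤ) (M : Matrix (Fin 2) (Fin 2) ℤ) : Prop :=
  k ∣ (M 0 0 - M 1 1) ∧ k ∣ M 1 0 ∧ l ∣ M 0 1


lemma natlift (m : ℕ) (hm : m ≠ 0) (x n : ℕ) (hx : x.Coprime n) :
    ∃ k : ℕ, (x + k * n).Coprime m := by
  let ps := m.primeFactors.filter (fun p ↦ ¬p ∣ x)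
  use ps.prod id
  apply Nat.coprime_of_dvd
  intro p pp hp hpn
  by_cases hpx : p ∣ x
  · have h := Nat.dvd_sub hp hpx
    rw [add_comm, Nat.add_sub_cancel] at h
    rcases pp.dvd_mul.mp h with h | h
    · have ⟨q, hq, hq'⟩ := (pp.prime.dvd_finset_prod_iff id).mp h
      rw [Finset.mem_filter, Nat.mem_primeFactors,
        ← (Nat.prime_dvd_prime_iff_eq pp hq.1.1).mp hq'] at hq
      exact hq.2 hpx
    · exact Nat.Prime.not_coprime_iff_dvd.mpr ⟨p, pp, hpx, h⟩ hx
  · have pps : p ∈ ps := Finset.mem_filter.mpr ⟨Nat.mem_primeFactors.mpr ⟨pp, hpn, hm⟩, hpx⟩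
    have : p ∣ x + ps.prod id * n :=  hp
    have h2 : p ∣ ps.prod id * n := Dvd.dvd.mul_right (Finset.dvd_prod_of_mem id pps) n
    exact hpx ((Nat.dvd_add_iff_left h2).mpr this)

lemma intlift (a k l : ℤ) (hkl : k * l ≠ 0) (h : IsCoprime a k) :
    ∃ t : ℤ, IsCoprime (a + k * t) (k * l) := by
  have hnat : Nat.Coprime a.natAbs k.natAbs := Int.isCoprime_iff_gcd_eq_one.mp h
  obtain ⟨k₀, hk₀⟩ := natlift (k * l).natAbs (Int.natAbs_ne_zero.mpr hkl) a.natAbs k.natAbs hnat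
  have hA : IsCoprime ((a.natAbs + k₀ * k.natAbs : ℕ) : ℤ) (k * l) := by
    rw [Int.isCoprime_iff_gcd_eq_one, Int.gcd]
    rwa [Int.natAbs_natCast]
  have hcast : ((a.natAbs + k₀ * k.natAbs : ℕ) : ℤ) = (a.natAbs : ℤ) + (k₀ : ℤ) * (k.natAbs : ℤ) := by
    push_cast; ring
  rw [hcast] at hA
  rcases Int.natAbs_eq a with ha | ha <;> rcases Int.natAbs_eq k with hk' | hk'
  · exact ⟨k₀, by rw [← ha, ← hk'] at hA; simpa [mul_comm] using hA⟩
  · refine ⟨-k₀, ?_⟩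
    rw [← ha] at hA
    have : (k.natAbs : ℤ) = -k := by omega
    rw [this] at hA
    simpa [mul_comm] using hA
  · refine ⟨-k₀, ?_⟩
    have h1 : (a.natAbs : ℤ) = -a := by omega
    rw [h1, ← hk'] at hA
    have h2 : -a + (k₀ : ℤ) * k = -(a + k * -(k₀ : ℤ)) := by ring
    rw [h2] at hA
    exact (IsCoprime.neg_left_iff _ _).mp hA
  · refine ⟨k₀, ?_⟩
    have h1 : (a.natAbs : ℤ) = -a := by omega
    have h2 : (k.natAbs : ℤ) = -k := by omega
    rw [h1, h2] at hA
    have h3 : -a + (k₀ : ℤ) * -k = -(a + k * k₀) := by ring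
    rw [h3] at hA
    exact (IsCoprime.neg_left_iff _ _).mp hA

private theorem stmt_1_aux (k l : ℤ) (hk : k ≠ 0) (hl : l ≠ 0) :
    (∀ M : Matrix (Fin 2) (Fin 2) ℤ, (k ∣ (M 0 0 - M 1 1) ∧ k ∣ M 1 0 ∧ l ∣ M 0 1) →
      (M.det = 1 ∨ M.det = -1) → M.det = 1) ↔
    ¬ ∃ a : ℤ, k ∣ (a ^ 2 + 1) := by
  constructor
  · rintro H ⟨a, m, hm⟩
    have hco : IsCoprime a k := ⟨-a, m, by linear_combination -hm⟩
    obtain ⟨t, hco'⟩ := intlift a k l (mul_ne_zero hk hl) hco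
    set a' := a + k * t with ha'
    obtain ⟨u, v, huv⟩ := hco'
    set M : Matrix (Fin 2) (Fin 2) ℤ := !![a', l * v; k, -u] with hM
    have hdet : M.det = -1 := by
      rw [hM, Matrix.det_fin_two_of]
      linear_combination -huv
    have hB : k ∣ (M 0 0 - M 1 1) ∧ k ∣ M 1 0 ∧ l ∣ M 0 1 := by
      refine ⟨?_, ?_, ?_⟩
      · show k ∣ (a' - -u)
        have hcoak : IsCoprime k a' := (hco.add_mul_left_left t).symm
        have hdvd : k ∣ a' * (a' - -u) := by
          refine ⟨m + 2 * a * t + k * t ^ 2 - v * l, ?_⟩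
          linear_combination hm + huv
        exact hcoak.dvd_of_dvd_mul_left hdvd
      · exact ⟨1, (mul_one k).symm⟩
      · exact ⟨v, rfl⟩
    have := H M hB (Or.inr hdet)
    rw [hdet] at this
    norm_num at this
  · intro hne M hB hdet
    rcases hdet with h1 | h1
    · exact h1
    exfalso
    apply hne
    obtain ⟨s, hs⟩ := hB.1
    obtain ⟨r, hr⟩ := hB.2.1
    rw [Matrix.det_fin_two] at h1
    have key : M 0 0 ^ 2 + 1 = k * (M 0 0 * s + M 0 1 * r) := by
      linear_combination M 0 0 * hs + M 0 1 * hr + h1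
    exact ⟨M 0 0, _, key⟩

/-- `B_{k,l}^× ⊆ SL_2(ℤ)` iff there is no integer `a` with `a² ≡ -1 mod k`. -/
theorem stmt_1 (k l : ℤ) (hk : k ≠ 0) (hl : l ≠ 0) :
    (∀ M : Matrix (Fin 2) (Fin 2) ℤ, Bmem k l M →
      (M.det = 1 ∨ M.det = -1) → M.det = 1) ↔
    ¬ ∃ a : ℤ, k ∣ (a ^ 2 + 1) := by
  exact stmt_1_aux k l hk hl
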